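/- Let q be a prime power, let k be a field containing F_q as a subfield (equivalently, a field that is an F_q-algebra), and let I₀ be a proper quasi-primary ideal of the polynomial ring k[x₁,…,x_n]. Consider the F_q-linear map Ψ_{I₀} on the quotient ring k[x₁,…,x_n]/I₀ defined by Ψ_{I₀}(f̄) = f̄^q − f̄. Then the kernel of Ψ_{I₀} is exactly the image of F_q under the natural map F_q → k[x₁,…,x_n]/I₀; that is, {f̄ ∈ k[x₁,…,x_n]/I₀ : f̄^q = f̄} = F_q·1̄. -/

import Mathlib

/-- Let `k` be a field containing the finite field `F_q` (i.e. a field that is an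
`F_q`-algebra) and let `I₀` be a proper quasi-primary ideal of `k[x₁,…,x_n]`
(i.e. `√I₀` is prime).  Then the kernel of the `F_q`-linear map
`Ψ_{I₀} : f̄ ↦ f̄^q − f̄` on `k[x₁,…,x_n]/I₀`, i.e. the set `{f̄ : f̄^q = f̄}`, is
exactly the image of `F_q` under the natural map `F_q → k[x₁,…,x_n]/I₀`. -/
theorem ker_psi_of_quasiPrimary
    {Fq k : Type*} [Field Fq] [Fintype Fq] [Field k] [Algebra Fq k]
    (n : ℕ) (I₀ : Ideal (MvPolynomial (Fin n) k)) (hproper : I₀ ≠ ⊤)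
    (hqp : I₀.radical.IsPrime) :
    {f : MvPolynomial (Fin n) k ⧸ I₀ | f ^ Fintype.card Fq = f} =
      Set.range (algebraMap Fq (MvPolynomial (Fin n) k ⧸ I₀)) := by
  classical
  set R := MvPolynomial (Fin n) k ⧸ I₀ with hR
  haveI : Nontrivial R := Ideal.Quotient.nontrivial_iff.mpr hproper
  set q : ℕ := Fintype.card Fq with hqdef
  have hq1 : 1 < q := Fintype.one_lt_card
  -- characteristic setup
  set p : ℕ := ringChar Fq with hpdef
  haveI : CharP Fq p := ringChar.charP Fq
  obtain ⟨m, hpprime, hcard⟩ := FiniteField.card Fq p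
  haveI : Fact p.Prime := ⟨hpprime⟩
  haveI : CharP R p := charP_of_injective_ringHom (algebraMap Fq R).injective p
  ext f
  simp only [Set.mem_setOf_eq, Set.mem_range]
  constructor
  · intro hf
    -- the polynomial identity X^q - X = ∏ (X - C a) over Fq
    have hmonic : (Polynomial.X ^ q - Polynomial.X : Polynomial Fq).Monic :=
      Polynomial.monic_X_pow_sub (by rw [Polynomial.degree_X]; exact_mod_cast hq1)
    have hroots : (Polynomial.X ^ q - Polynomial.X : Polynomial Fq).roots
        = Finset.univ.val := FiniteField.roots_X_pow_card_sub_X Fq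
    have hdeg : (Polynomial.X ^ q - Polynomial.X : Polynomial Fq).natDegree = q :=
      FiniteField.X_pow_card_sub_X_natDegree_eq Fq hq1
    have hprodpoly :
        (Polynomial.X ^ q - Polynomial.X : Polynomial Fq)
          = ∏ a : Fq, (Polynomial.X - Polynomial.C a) := by
      have := Polynomial.prod_multiset_X_sub_C_of_monic_of_roots_card_eq hmonic
        (by rw [hroots, hdeg]; simp [q])
      rw [hroots] at this
      rw [← this]
      rfl
    -- apply aeval f
    have hzero : (∏ a : Fq, (f - algebraMap Fq R a)) = 0 := by
      have := congrArg (Polynomial.aeval f) hprodpoly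
      simp only [map_sub, map_pow, map_prod, Polynomial.aeval_X, Polynomial.aeval_C] at this
      rw [← this, hf, sub_self]
    -- the nilradical of R is prime
    set P : Ideal R := I₀.radical.map (Ideal.Quotient.mk I₀) with hP
    have hPprime : P.IsPrime :=
      Ideal.map_isPrime_of_surjective Ideal.Quotient.mk_surjective
        (by rw [Ideal.mk_ker]; exact Ideal.le_radical)
    have hmem : (∏ a : Fq, (f - algebraMap Fq R a)) ∈ P := by
      rw [hzero]; exact P.zero_mem
    obtain ⟨a, -, ha⟩ := (Ideal.IsPrime.prod_mem_iff).mp hmem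
    refine ⟨a, ?_⟩
    -- `g := f - φ a` is nilpotent
    rw [Ideal.mem_map_iff_of_surjective _ Ideal.Quotient.mk_surjective] at ha
    obtain ⟨y, hy, hy2⟩ := ha
    obtain ⟨m', hm'⟩ := Ideal.mem_radical_iff.mp hy
    have hnil : (f - algebraMap Fq R a) ^ m' = 0 := by
      rw [← hy2, ← map_pow, Ideal.Quotient.eq_zero_iff_mem]
      exact hm'
    -- `g ^ q = g`
    have h2 : (algebraMap Fq R a) ^ q = algebraMap Fq R a := by
      rw [← map_pow, show a ^ q = a from FiniteField.pow_card a]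
    have hgq : (f - algebraMap Fq R a) ^ q = f - algebraMap Fq R a := by
      calc (f - algebraMap Fq R a) ^ q
          = (f - algebraMap Fq R a) ^ (p ^ (m : ℕ)) := by rw [hqdef, hcard]
        _ = f ^ (p ^ (m : ℕ)) - (algebraMap Fq R a) ^ (p ^ (m : ℕ)) :=
            sub_pow_char_pow _ _ _
        _ = f - algebraMap Fq R a := by rw [← hcard, ← hqdef, hf, h2]
    have key : ∀ j : ℕ, (f - algebraMap Fq R a) ^ (q ^ j) = f - algebraMap Fq R a := by
      intro j
      induction j with
      | zero => simp
      | succ j ih => rw [pow_succ, pow_mul, ih, hgq]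
    have hle : m' ≤ q ^ m' := (Nat.lt_pow_self (n := m') hq1).le
    have hg0 : f - algebraMap Fq R a = 0 := by
      calc f - algebraMap Fq R a = (f - algebraMap Fq R a) ^ (q ^ m') := (key m').symm
        _ = (f - algebraMap Fq R a) ^ m' * (f - algebraMap Fq R a) ^ (q ^ m' - m') := by
            rw [← pow_add, Nat.add_sub_cancel' hle]
        _ = 0 := by rw [hnil, zero_mul]
    exact (sub_eq_zero.mp hg0).symm
  · rintro ⟨a, rfl⟩
    rw [← map_pow, FiniteField.pow_card]
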